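/- Let X and Y be Polish spaces and let A, B be analytic subsets of X × Y. If A cannot be separated from B by a set of the form C × D with C, D Borel, then (Π₀[A] × Π₁[A]) ∩ B ≠ ∅; in particular A cannot be separated from B by any rectangle C × D whatsoever. -/

import Mathlib

open MeasureTheory Set

theorem analyticSet_inter' {α : Type*} [TopologicalSpace α] [T2Space α] {s t : Set α}
    (hs : MeasureTheory.AnalyticSet s) (ht : MeasureTheory.AnalyticSet t) :
    MeasureTheory.AnalyticSet (s ∩ t) := by
  have : s ∩ t = ⋂ b : Bool, (if b then s else t) := by
    ext x; simp [Bool.forall_bool, and_comm]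
  rw [this]
  exact MeasureTheory.AnalyticSet.iInter (by rintro (_|_) <;> simpa)

theorem analyticSet_prod' {α β : Type*} [TopologicalSpace α] [TopologicalSpace β]
    {s : Set α} {t : Set β} (hs : MeasureTheory.AnalyticSet s)
    (ht : MeasureTheory.AnalyticSet t) : MeasureTheory.AnalyticSet (s ×ˢ t) := by
  rcases MeasureTheory.analyticSet_iff_exists_polishSpace_range.1 hs with
    ⟨γ, γtop, γpol, f, fc, hf⟩
  rcases MeasureTheory.analyticSet_iff_exists_polishSpace_range.1 ht with
    ⟨δ, δtop, δpol, g, gc, hg⟩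
  have : s ×ˢ t = Set.range (Prod.map f g) := by rw [Set.range_prodMap, hf, hg]
  rw [this]
  exact MeasureTheory.analyticSet_range_of_polishSpace (fc.prodMap gc)

/-- If analytic sets `A, B` in a product of Polish spaces cannot be separated by a Borel
rectangle, then the product of the projections of `A` meets `B`; in particular `A` cannot be
separated from `B` by any rectangle whatsoever. -/
theorem stmt1 {X Y : Type*}
    [TopologicalSpace X] [PolishSpace X] [MeasurableSpace X] [BorelSpace X]
    [TopologicalSpace Y] [PolishSpace Y] [MeasurableSpace Y] [BorelSpace Y]
    (A B : Set (X × Y)) (hA : AnalyticSet A) (hB : AnalyticSet B)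
    (h : ¬ ∃ (C : Set X) (D : Set Y), MeasurableSet C ∧ MeasurableSet D ∧
      A ⊆ C ×ˢ D ∧ (C ×ˢ D) ∩ B = ∅) :
    (((Prod.fst '' A) ×ˢ (Prod.snd '' A)) ∩ B ≠ ∅) ∧
      ¬ ∃ (C : Set X) (D : Set Y), A ⊆ C ×ˢ D ∧ (C ×ˢ D) ∩ B = ∅ := by
  have main : ((Prod.fst '' A) ×ˢ (Prod.snd '' A)) ∩ B ≠ ∅ := by
    intro hempty
    apply h
    -- projections are analytic
    have hA0 : AnalyticSet (Prod.fst '' A) := hA.image_of_continuous continuous_fst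
    have hA1 : AnalyticSet (Prod.snd '' A) := hA.image_of_continuous continuous_snd
    -- B ∩ (univ ×ˢ Π₁A) is analytic, its first projection B₀ is analytic
    set B0 : Set X := Prod.fst '' (B ∩ (univ ×ˢ (Prod.snd '' A))) with hB0def
    have hB0 : AnalyticSet B0 :=
      (analyticSet_inter' hB ((analyticSet_prod' (MeasurableSet.univ.analyticSet) hA1))).image_of_continuous continuous_fst
    have hdisj0 : Disjoint (Prod.fst '' A) B0 := by
      rw [Set.disjoint_left]
      rintro x hx ⟨⟨x', y⟩, ⟨hBxy, -, hy⟩, rfl⟩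
      have : (x', y) ∈ ((Prod.fst '' A) ×ˢ (Prod.snd '' A)) ∩ B := ⟨⟨hx, hy⟩, hBxy⟩
      rw [hempty] at this; exact this
    obtain ⟨C, hAC, hdCB0, hCm⟩ := hA0.measurablySeparable hB0 hdisj0
    -- second projection of B ∩ (C ×ˢ univ)
    set B1 : Set Y := Prod.snd '' (B ∩ (C ×ˢ univ)) with hB1def
    have hB1 : AnalyticSet B1 :=
      (analyticSet_inter' hB (analyticSet_prod' hCm.analyticSet (MeasurableSet.univ.analyticSet))).image_of_continuous continuous_snd
    have hdisj1 : Disjoint (Prod.snd '' A) B1 := by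
      rw [Set.disjoint_left]
      rintro y hy ⟨⟨x, y'⟩, ⟨hBxy, hx, -⟩, rfl⟩
      have hxB0 : x ∈ B0 := ⟨(x, y'), ⟨hBxy, trivial, hy⟩, rfl⟩
      exact (Set.disjoint_left.1 hdCB0) hxB0 hx
    obtain ⟨D, hAD, hdDB1, hDm⟩ := hA1.measurablySeparable hB1 hdisj1
    refine ⟨C, D, hCm, hDm, ?_, ?_⟩
    · rintro ⟨x, y⟩ hxy
      exact ⟨hAC ⟨(x, y), hxy, rfl⟩, hAD ⟨(x, y), hxy, rfl⟩⟩
    · ext ⟨x, y⟩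
      simp only [Set.mem_inter_iff, Set.mem_prod, Set.mem_empty_iff_false, iff_false]
      rintro ⟨⟨hxC, hyD⟩, hBxy⟩
      exact (Set.disjoint_left.1 hdDB1) (⟨(x, y), ⟨hBxy, hxC, trivial⟩, rfl⟩ : y ∈ B1) hyD
  refine ⟨main, ?_⟩
  rintro ⟨C, D, hACD, hCDB⟩
  apply main
  rw [Set.eq_empty_iff_forall_notMem]
  rintro ⟨x, y⟩ ⟨⟨⟨⟨x', y'⟩, hx'A, rfl⟩, ⟨⟨x'', y''⟩, hy''A, rfl⟩⟩, hBxy⟩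
  have hx : (x', y').1 ∈ C := (hACD hx'A).1
  have hy : (x'', y'').2 ∈ D := (hACD hy''A).2
  have : ((x', y').1, (x'', y'').2) ∈ (C ×ˢ D) ∩ B := ⟨⟨hx, hy⟩, hBxy⟩
  rw [hCDB] at this; exact this
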